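/- Let N ≥ 2 and T_L, T_R > 0. Call a family of positive reals (T_0, …, T_N) a confined self-consistent profile if (T_n − T_{n+1})/(T_n^{−1/2} + T_{n+1}^{−1/2}) + (T_n − T_{n−1})/(T_n^{−1/2} + T_{n−1}^{−1/2}) = 0 for all n = 1, …, N−1. Then: (a) a positive family (T_0, …, T_N) is a confined self-consistent profile if and only if the quantity J_n := (T_{n+1} − T_n)/(T_n^{−1/2} + T_{n+1}^{−1/2}) is independent of n ∈ {0, …, N−1}; (b) there exists exactly one confined self-consistent profile with T_0 = T_L and T_N = T_R; and (c) if T_L ≤ T_R, this profile is nondecreasing and concave, i.e. T_n ≤ T_{n+1} and T_{n+1} − T_n ≤ T_n − T_{n−1} for all admissible n. -/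

import Mathlib

noncomputable def st18cur (T : ℕ → ℝ) (n : ℕ) : ℝ :=
  (T (n+1) - T n) / ((T n) ^ (-(1:ℝ)/2) + (T (n+1)) ^ (-(1:ℝ)/2))

noncomputable def st18g (s J : ℝ) : ℝ := (s + Real.sqrt (s^2 + 4*J/s))/2

noncomputable def st18chain (s0 J : ℝ) : ℕ → ℝ
  | 0 => s0
  | n+1 => st18g (st18chain s0 J n) J

lemma st18chain_succ (s0 J : ℝ) (n : ℕ) :
    st18chain s0 J (n+1) = st18g (st18chain s0 J n) J := rfl

lemma st18_rpow_neg_half (a : ℝ) (ha : 0 < a) : a ^ (-(1:ℝ)/2) = (Real.sqrt a)⁻¹ := by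
  rw [show (-(1:ℝ)/2) = -(1/2) by norm_num, Real.rpow_neg ha.le, ← Real.sqrt_eq_rpow]

lemma st18_gen (x y : ℝ) (hx : 0 < x) (hy : 0 < y) :
    (y^2 - x^2) / (x⁻¹ + y⁻¹) = x * y * (y - x) := by
  field_simp
  ring

lemma st18_cur_eq {T : ℕ → ℝ} (n : ℕ) (ha : 0 < T n) (hb : 0 < T (n+1)) :
    st18cur T n = Real.sqrt (T n) * Real.sqrt (T (n+1))
      * (Real.sqrt (T (n+1)) - Real.sqrt (T n)) := by
  have hx : 0 < Real.sqrt (T n) := Real.sqrt_pos.mpr ha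
  have hy : 0 < Real.sqrt (T (n+1)) := Real.sqrt_pos.mpr hb
  have hx2 : Real.sqrt (T n) ^ 2 = T n := Real.sq_sqrt ha.le
  have hy2 : Real.sqrt (T (n+1)) ^ 2 = T (n+1) := Real.sq_sqrt hb.le
  unfold st18cur
  rw [st18_rpow_neg_half _ ha, st18_rpow_neg_half _ hb]
  calc (T (n+1) - T n) / ((Real.sqrt (T n))⁻¹ + (Real.sqrt (T (n+1)))⁻¹)
      = (Real.sqrt (T (n+1)) ^ 2 - Real.sqrt (T n) ^ 2) /
        ((Real.sqrt (T n))⁻¹ + (Real.sqrt (T (n+1)))⁻¹) := by rw [hx2, hy2]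
    _ = _ := st18_gen _ _ hx hy

lemma st18g_ge {s J : ℝ} (hs : 0 < s) (hJ : 0 ≤ J) : s ≤ st18g s J := by
  have h1 : Real.sqrt (s^2) ≤ Real.sqrt (s^2 + 4*J/s) := by
    apply Real.sqrt_le_sqrt; nlinarith [div_nonneg (by linarith : (0:ℝ) ≤ 4*J) hs.le]
  rw [Real.sqrt_sq hs.le] at h1
  unfold st18g; linarith

lemma st18g_pos {s J : ℝ} (hs : 0 < s) (hJ : 0 ≤ J) : 0 < st18g s J :=
  lt_of_lt_of_le hs (st18g_ge hs hJ)

lemma st18g_root {s J : ℝ} (hs : 0 < s) (hJ : 0 ≤ J) :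
    s * st18g s J * (st18g s J - s) = J := by
  have harg : 0 ≤ s^2 + 4*J/s := by positivity
  have hr2 : Real.sqrt (s^2 + 4*J/s) ^ 2 = s^2 + 4*J/s := Real.sq_sqrt harg
  have h4 : s * Real.sqrt (s^2 + 4*J/s) ^ 2 = s^3 + 4*J := by
    rw [hr2]; field_simp
  unfold st18g
  linear_combination (1/4) * h4

lemma st18g_unique {s J x : ℝ} (hs : 0 < s) (hJ : 0 ≤ J) (hx : 0 < x)
    (hroot : s * x * (x - s) = J) : x = st18g s J := by
  have hg := st18g_root hs hJ
  have hge := st18g_ge hs hJ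
  have hgpos : 0 < st18g s J := st18g_pos hs hJ
  have hxs : s ≤ x := by nlinarith [mul_pos hs hx]
  have hzero : s * (x - st18g s J) * (x + st18g s J - s) = 0 := by
    linear_combination hroot - hg
  have hfac : 0 < x + st18g s J - s := by linarith
  have := mul_eq_zero.mp hzero
  rcases this with h | h
  · rcases mul_eq_zero.mp h with h' | h'
    · exact absurd h' hs.ne'
    · linarith
  · linarith

lemma st18g_lt {s s' J J' : ℝ} (hs' : 0 < s') (hss : s' ≤ s) (hJ' : 0 ≤ J')
    (hc : J'/s' < J/s) : st18g s' J' < st18g s J := by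
  have hs : 0 < s := lt_of_lt_of_le hs' hss
  have h1 : 4*J'/s' = 4*(J'/s') := by rw [mul_div_assoc]
  have h2 : 4*J/s = 4*(J/s) := by rw [mul_div_assoc]
  have hsq : s'^2 ≤ s^2 := by nlinarith
  have harg : s'^2 + 4*J'/s' < s^2 + 4*J/s := by rw [h1, h2]; nlinarith
  have h0 : (0:ℝ) ≤ s'^2 + 4*J'/s' := by positivity
  have := Real.sqrt_lt_sqrt h0 harg
  unfold st18g; linarith

-- J / g(s,J) identity

lemma st18_Jdiv {s J : ℝ} (hs : 0 < s) (hJ : 0 ≤ J) :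
    J / st18g s J = s * (Real.sqrt (s^2 + 4*J/s) - s) / 2 := by
  have hg : s * st18g s J * (st18g s J - s) = J := by
    have harg : 0 ≤ s^2 + 4*J/s := by positivity
    have hr2 : Real.sqrt (s^2 + 4*J/s) ^ 2 = s^2 + 4*J/s := Real.sq_sqrt harg
    have h4 : s * Real.sqrt (s^2 + 4*J/s) ^ 2 = s^3 + 4*J := by
      rw [hr2]; field_simp
    unfold st18g; linear_combination (1/4) * h4
  have hgpos : 0 < st18g s J := by
    have h1 : Real.sqrt (s^2) ≤ Real.sqrt (s^2 + 4*J/s) := by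
      apply Real.sqrt_le_sqrt; nlinarith [div_nonneg (by linarith : (0:ℝ) ≤ 4*J) hs.le]
    rw [Real.sqrt_sq hs.le] at h1
    unfold st18g at *; linarith
  rw [div_eq_iff hgpos.ne']
  have : st18g s J - s = (Real.sqrt (s^2 + 4*J/s) - s)/2 := by unfold st18g; ring
  calc J = s * st18g s J * (st18g s J - s) := hg.symm
    _ = s * (Real.sqrt (s^2 + 4*J/s) - s) / 2 * st18g s J := by rw [this]; ring

lemma st18_psi_mono {s s' c c' : ℝ} (hs' : 0 < s') (hss : s' ≤ s) (hc' : 0 ≤ c')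
    (hcc : c' < c) :
    s' * (Real.sqrt (s'^2 + 4*c') - s') / 2 < s * (Real.sqrt (s^2 + 4*c) - s) / 2 := by
  have hs : 0 < s := lt_of_lt_of_le hs' hss
  have hA'0 : 0 ≤ Real.sqrt (s'^2 + 4*c') := Real.sqrt_nonneg _
  have hA0 : 0 ≤ Real.sqrt (s^2 + 4*c') := Real.sqrt_nonneg _
  set A' := Real.sqrt (s'^2 + 4*c') with hA'def
  set A := Real.sqrt (s^2 + 4*c') with hAdef
  set B := Real.sqrt (s^2 + 4*c) with hBdef
  have hA'sq : A'^2 = s'^2 + 4*c' := Real.sq_sqrt (by positivity)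
  have hAsq : A^2 = s^2 + 4*c' := Real.sq_sqrt (by positivity)
  -- step 1 : s' * A ≤ s * A'
  have hkey : s' * A ≤ s * A' := by
    have hsq : (s' * A)^2 ≤ (s * A')^2 := by nlinarith [mul_nonneg hc' (sub_nonneg.mpr (by nlinarith : s'^2 ≤ s^2))]
    have h := Real.sqrt_le_sqrt hsq
    rwa [Real.sqrt_sq (by positivity), Real.sqrt_sq (by positivity)] at h
  -- step 2 : s'(A'-s') ≤ s(A-s)
  have h2 : s' * (A' - s') ≤ s * (A - s) := by
    have hid : (s * (A - s) - s' * (A' - s')) * ((A + s) * (A' + s'))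
        = 4*c'*(s*A' - s'*A) := by
      linear_combination (s*(A'+s'))*hAsq - (s'*(A+s))*hA'sq
    have hpos : 0 < (A + s) * (A' + s') :=
      mul_pos (by linarith) (by linarith)
    nlinarith [hid, hpos, mul_nonneg (mul_nonneg (by norm_num : (0:ℝ) ≤ 4) hc')
      (sub_nonneg.mpr hkey)]
  -- step 3 : strict in c
  have h3 : A < B := Real.sqrt_lt_sqrt (by positivity) (by linarith)
  have h4 : s * (A - s) < s * (B - s) := by nlinarith
  linarith

lemma st18_step {s s' J J' : ℝ} (hs' : 0 < s') (hss : s' ≤ s) (hJ' : 0 ≤ J') (hJ : 0 ≤ J)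
    (hc : J'/s' < J/s) :
    st18g s' J' < st18g s J ∧ J'/(st18g s' J') < J/(st18g s J) := by
  have hs : 0 < s := lt_of_lt_of_le hs' hss
  refine ⟨st18g_lt hs' hss hJ' hc, ?_⟩
  rw [st18_Jdiv hs' hJ', st18_Jdiv hs hJ]
  rw [show 4*J'/s' = 4*(J'/s') by rw [mul_div_assoc], show 4*J/s = 4*(J/s) by rw [mul_div_assoc]]
  exact st18_psi_mono hs' hss (div_nonneg hJ' hs'.le) hc

lemma st18chain_ge {s0 J : ℝ} (hs0 : 0 < s0) (hJ : 0 ≤ J) :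
    ∀ n, s0 ≤ st18chain s0 J n := by
  intro n
  induction n with
  | zero => exact le_rfl
  | succ n ih =>
      exact le_trans ih (st18g_ge (lt_of_lt_of_le hs0 ih) hJ)

lemma st18chain_pos {s0 J : ℝ} (hs0 : 0 < s0) (hJ : 0 ≤ J) (n : ℕ) :
    0 < st18chain s0 J n := lt_of_lt_of_le hs0 (st18chain_ge hs0 hJ n)

lemma st18chain_zero {s0 : ℝ} (hs0 : 0 < s0) : ∀ n, st18chain s0 0 n = s0 := by
  intro n
  induction n with
  | zero => rfl
  | succ n ih =>
      show st18g (st18chain s0 0 n) 0 = s0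
      rw [ih]
      unfold st18g
      rw [mul_zero, zero_div, add_zero, Real.sqrt_sq hs0.le]
      ring

lemma st18chain_mono {s0 J : ℝ} (hs0 : 0 < s0) (hJ : 0 ≤ J) :
    Monotone (st18chain s0 J) := by
  apply monotone_nat_of_le_succ
  intro n
  exact st18g_ge (st18chain_pos hs0 hJ n) hJ

lemma st18chain_cont {s0 : ℝ} (hs0 : 0 < s0) (n : ℕ) :
    ContinuousOn (fun J => st18chain s0 J n) (Set.Ici 0) := by
  induction n with
  | zero => exact continuousOn_const
  | succ n ih =>
      have hpos : ∀ J ∈ Set.Ici (0:ℝ), st18chain s0 J n ≠ 0 :=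
        fun J hJ => (st18chain_pos hs0 hJ n).ne'
      show ContinuousOn (fun J => st18g (st18chain s0 J n) J) _
      unfold st18g
      apply ContinuousOn.div_const
      apply ContinuousOn.add ih
      apply ContinuousOn.sqrt
      apply ContinuousOn.add (ih.pow 2)
      exact ContinuousOn.div (continuousOn_const.mul continuousOn_id) ih hpos

lemma st18_cur_const {N : ℕ} {T : ℕ → ℝ}
    (hsc : ∀ n : ℕ, 1 ≤ n → n ≤ N - 1 →
      (T n - T (n + 1)) / ((T n) ^ (-(1:ℝ)/2) + (T (n + 1)) ^ (-(1:ℝ)/2)) +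
      (T n - T (n - 1)) / ((T n) ^ (-(1:ℝ)/2) + (T (n - 1)) ^ (-(1:ℝ)/2)) = 0) :
    ∀ n < N, st18cur T n = st18cur T 0 := by
  intro n
  induction n with
  | zero => intro _; rfl
  | succ n ih =>
      intro hn
      have e := hsc (n+1) (by omega) (by omega)
      simp only [Nat.add_sub_cancel] at e
      have ihn := ih (by omega)
      rw [← ihn]
      unfold st18cur
      have d1 : (T (n+1) - T (n+1+1)) / ((T (n+1)) ^ (-(1:ℝ)/2) + (T (n+1+1)) ^ (-(1:ℝ)/2))
          = -((T (n+1+1) - T (n+1)) / ((T (n+1)) ^ (-(1:ℝ)/2) + (T (n+1+1)) ^ (-(1:ℝ)/2))) := by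
        ring
      have d2 : (T (n+1) - T n) / ((T (n+1)) ^ (-(1:ℝ)/2) + (T n) ^ (-(1:ℝ)/2))
          = (T (n+1) - T n) / ((T n) ^ (-(1:ℝ)/2) + (T (n+1)) ^ (-(1:ℝ)/2)) := by
        rw [add_comm ((T (n+1)) ^ (-(1:ℝ)/2)) ((T n) ^ (-(1:ℝ)/2))]
      rw [d1, d2] at e
      linarith

lemma st18_sc_of_const {N : ℕ} {T : ℕ → ℝ} {J : ℝ}
    (hJ : ∀ n < N, st18cur T n = J) :
    ∀ n : ℕ, 1 ≤ n → n ≤ N - 1 →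
      (T n - T (n + 1)) / ((T n) ^ (-(1:ℝ)/2) + (T (n + 1)) ^ (-(1:ℝ)/2)) +
      (T n - T (n - 1)) / ((T n) ^ (-(1:ℝ)/2) + (T (n - 1)) ^ (-(1:ℝ)/2)) = 0 := by
  intro n h1 h2
  obtain ⟨m, rfl⟩ : ∃ m, n = m + 1 := ⟨n - 1, by omega⟩
  simp only [Nat.add_sub_cancel]
  have e1 := hJ (m+1) (by omega)
  have e2 := hJ m (by omega)
  unfold st18cur at e1 e2
  have d1 : (T (m+1) - T (m+1+1)) / ((T (m+1)) ^ (-(1:ℝ)/2) + (T (m+1+1)) ^ (-(1:ℝ)/2))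
      = -((T (m+1+1) - T (m+1)) / ((T (m+1)) ^ (-(1:ℝ)/2) + (T (m+1+1)) ^ (-(1:ℝ)/2))) := by
    ring
  have d2 : (T (m+1) - T m) / ((T (m+1)) ^ (-(1:ℝ)/2) + (T m) ^ (-(1:ℝ)/2))
      = (T (m+1) - T m) / ((T m) ^ (-(1:ℝ)/2) + (T (m+1)) ^ (-(1:ℝ)/2)) := by
    rw [add_comm ((T (m+1)) ^ (-(1:ℝ)/2)) ((T m) ^ (-(1:ℝ)/2))]
  rw [d1, d2]
  linarith

lemma st18_Jnonneg {N : ℕ} (hN : 1 ≤ N) {s : ℕ → ℝ} (hpos : ∀ n ≤ N, 0 < s n) {J : ℝ}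
    (hJall : ∀ n < N, s n * s (n+1) * (s (n+1) - s n) = J) (hle : s 0 ≤ s N) :
    0 ≤ J := by
  by_contra hneg
  push_neg at hneg
  have hdec : ∀ n < N, s (n+1) < s n := by
    intro n hn
    nlinarith [hJall n hn, mul_pos (hpos n (by omega)) (hpos (n+1) (by omega))]
  have key : ∀ n, 1 ≤ n → n ≤ N → s n < s 0 := by
    intro n
    induction n with
    | zero => omega
    | succ k ih =>
        intro _ hk
        rcases Nat.eq_zero_or_pos k with h | h
        · subst h; exact hdec 0 (by omega)
        · exact lt_trans (hdec k (by omega)) (ih h (by omega))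
  linarith [key N hN le_rfl]

lemma st18_chains_strict {N : ℕ} (hN : 1 ≤ N) {s s' : ℕ → ℝ} {J J' : ℝ}
    (hspos : ∀ n ≤ N, 0 < s n) (hspos' : ∀ n ≤ N, 0 < s' n)
    (h0 : s' 0 = s 0) (hJ : 0 ≤ J) (hJ' : 0 ≤ J')
    (hrep : ∀ n < N, s (n+1) = st18g (s n) J)
    (hrep' : ∀ n < N, s' (n+1) = st18g (s' n) J')
    (hlt : J' < J) : s' N < s N := by
  have main : ∀ n, 1 ≤ n → n ≤ N → s' n < s n ∧ J'/(s' n) < J/(s n) := by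
    intro n
    induction n with
    | zero => omega
    | succ k ih =>
        intro _ hk
        rcases Nat.eq_zero_or_pos k with h | h
        · subst h
          rw [hrep 0 (by omega), hrep' 0 (by omega), h0]
          exact st18_step (h0 ▸ hspos' 0 (by omega)) le_rfl hJ' hJ
            ((div_lt_div_iff_of_pos_right (hspos 0 (by omega))).mpr hlt)
        · obtain ⟨ih1, ih2⟩ := ih h (by omega)
          rw [hrep k (by omega), hrep' k (by omega)]
          exact st18_step (hspos' k (by omega)) ih1.le hJ' hJ ih2
  exact (main N hN le_rfl).1

lemma st18_uniq {N : ℕ} (hN : 1 ≤ N) {T T' : ℕ → ℝ}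
    (hpos : ∀ n ≤ N, 0 < T n) (hpos' : ∀ n ≤ N, 0 < T' n)
    (h0 : T 0 = T' 0) (hE : T N = T' N) (hle : T 0 ≤ T N)
    {J J' : ℝ}
    (hJall : ∀ n < N, Real.sqrt (T n) * Real.sqrt (T (n+1))
      * (Real.sqrt (T (n+1)) - Real.sqrt (T n)) = J)
    (hJ'all : ∀ n < N, Real.sqrt (T' n) * Real.sqrt (T' (n+1))
      * (Real.sqrt (T' (n+1)) - Real.sqrt (T' n)) = J') :
    ∀ n ≤ N, T n = T' n := by
  set s : ℕ → ℝ := fun n => Real.sqrt (T n) with hs_def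
  set s' : ℕ → ℝ := fun n => Real.sqrt (T' n) with hs'_def
  have hspos : ∀ n ≤ N, 0 < s n := fun n hn => Real.sqrt_pos.mpr (hpos n hn)
  have hspos' : ∀ n ≤ N, 0 < s' n := fun n hn => Real.sqrt_pos.mpr (hpos' n hn)
  have hsle : s 0 ≤ s N := Real.sqrt_le_sqrt hle
  have hsle' : s' 0 ≤ s' N := by
    show Real.sqrt (T' 0) ≤ Real.sqrt (T' N)
    rw [← h0, ← hE]; exact Real.sqrt_le_sqrt hle
  have hs0 : s' 0 = s 0 := by show Real.sqrt (T' 0) = Real.sqrt (T 0); rw [h0]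
  have hsE : s' N = s N := by show Real.sqrt (T' N) = Real.sqrt (T N); rw [hE]
  have hJ0 : 0 ≤ J := st18_Jnonneg hN hspos hJall hsle
  have hJ'0 : 0 ≤ J' := st18_Jnonneg hN hspos' hJ'all hsle'
  have hrep : ∀ n < N, s (n+1) = st18g (s n) J := fun n hn =>
    st18g_unique (hspos n (by omega)) hJ0 (hspos (n+1) (by omega)) (hJall n hn)
  have hrep' : ∀ n < N, s' (n+1) = st18g (s' n) J' := fun n hn =>
    st18g_unique (hspos' n (by omega)) hJ'0 (hspos' (n+1) (by omega)) (hJ'all n hn)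
  have hJJ : J = J' := by
    rcases lt_trichotomy J' J with h | h | h
    · exact absurd hsE (ne_of_lt (st18_chains_strict hN hspos hspos' hs0 hJ0 hJ'0 hrep hrep' h))
    · exact h.symm
    · exact absurd hsE.symm
        (ne_of_lt (st18_chains_strict hN hspos' hspos hs0.symm hJ'0 hJ0 hrep' hrep h))
  have hseq : ∀ n ≤ N, s n = s' n := by
    intro n
    induction n with
    | zero => intro _; exact hs0.symm
    | succ k ih =>
        intro hk
        rw [hrep k (by omega), hrep' k (by omega), ih (by omega), hJJ]
  intro n hn
  have := hseq n hn
  calc T n = (s n)^2 := (Real.sq_sqrt (hpos n hn).le).symm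
    _ = (s' n)^2 := by rw [this]
    _ = T' n := Real.sq_sqrt (hpos' n hn).le

lemma st18_exists {N : ℕ} (hN : 1 ≤ N) {TL TR : ℝ} (hTL : 0 < TL) (hTR : 0 < TR)
    (hle : TL ≤ TR) :
    ∃ T : ℕ → ℝ, (∀ n ≤ N, 0 < T n) ∧ T 0 = TL ∧ T N = TR ∧
      ∃ J, 0 ≤ J ∧ ∀ n < N, Real.sqrt (T n) * Real.sqrt (T (n+1))
        * (Real.sqrt (T (n+1)) - Real.sqrt (T n)) = J := by
  set s0 := Real.sqrt TL with hs0def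
  have hs0 : 0 < s0 := Real.sqrt_pos.mpr hTL
  set Jm := s0 * TR with hJmdef
  have hJm : (0:ℝ) ≤ Jm := by positivity
  have hcont : ContinuousOn (fun J => st18chain s0 J N) (Set.Icc 0 Jm) :=
    (st18chain_cont hs0 N).mono Set.Icc_subset_Ici_self
  have hf0 : st18chain s0 0 N = s0 := st18chain_zero hs0 N
  have hfJm : Real.sqrt TR ≤ st18chain s0 Jm N := by
    have h1 : st18chain s0 Jm 1 ≤ st18chain s0 Jm N := st18chain_mono hs0 hJm hN
    have h2 : Real.sqrt TR ≤ st18g s0 Jm := by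
      have e : 4*Jm/s0 = 4*TR := by rw [hJmdef]; field_simp
      have h3 : Real.sqrt (4*TR) ≤ Real.sqrt (s0^2 + 4*TR) := by
        apply Real.sqrt_le_sqrt; nlinarith [sq_nonneg s0]
      have h4 : Real.sqrt (4*TR) = 2 * Real.sqrt TR := by
        rw [show (4:ℝ)*TR = 2^2*TR by norm_num, Real.sqrt_mul (by positivity) TR,
          Real.sqrt_sq (by norm_num : (0:ℝ) ≤ 2)]
      unfold st18g
      rw [e]
      linarith [Real.sqrt_nonneg TL]
    calc Real.sqrt TR ≤ st18g s0 Jm := h2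
      _ = st18chain s0 Jm 1 := rfl
      _ ≤ st18chain s0 Jm N := h1
  have hmem : Real.sqrt TR ∈ Set.Icc (st18chain s0 0 N) (st18chain s0 Jm N) :=
    ⟨by rw [hf0]; exact Real.sqrt_le_sqrt hle, hfJm⟩
  obtain ⟨Js, hJsmem, hJs⟩ := intermediate_value_Icc hJm hcont hmem
  have hJs0 : 0 ≤ Js := hJsmem.1
  have cpos : ∀ n, 0 < st18chain s0 Js n := st18chain_pos hs0 hJs0
  refine ⟨fun n => (st18chain s0 Js n)^2, fun n _ => pow_pos (cpos n) 2, ?_, ?_, Js, hJs0, ?_⟩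
  · show (st18chain s0 Js 0)^2 = TL
    show s0^2 = TL
    exact Real.sq_sqrt hTL.le
  · show (st18chain s0 Js N)^2 = TR
    have hJs' : st18chain s0 Js N = Real.sqrt TR := hJs
    rw [hJs']; exact Real.sq_sqrt hTR.le
  · intro n hn
    simp only [Real.sqrt_sq (cpos n).le, Real.sqrt_sq (cpos (n+1)).le]
    show st18chain s0 Js n * st18g (st18chain s0 Js n) Js
      * (st18g (st18chain s0 Js n) Js - st18chain s0 Js n) = Js
    exact st18g_root (cpos n) hJs0

lemma st18_rev {N : ℕ} {T : ℕ → ℝ}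
    (hsc : ∀ n : ℕ, 1 ≤ n → n ≤ N - 1 →
      (T n - T (n + 1)) / ((T n) ^ (-(1:ℝ)/2) + (T (n + 1)) ^ (-(1:ℝ)/2)) +
      (T n - T (n - 1)) / ((T n) ^ (-(1:ℝ)/2) + (T (n - 1)) ^ (-(1:ℝ)/2)) = 0) :
    ∀ n : ℕ, 1 ≤ n → n ≤ N - 1 →
      (T (N - n) - T (N - (n + 1))) / ((T (N - n)) ^ (-(1:ℝ)/2) + (T (N - (n + 1))) ^ (-(1:ℝ)/2)) +
      (T (N - n) - T (N - (n - 1))) / ((T (N - n)) ^ (-(1:ℝ)/2) + (T (N - (n - 1))) ^ (-(1:ℝ)/2)) = 0 := by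
  intro n h1 h2
  have e1 : N - (n + 1) = (N - n) - 1 := by omega
  have e2 : N - (n - 1) = (N - n) + 1 := by omega
  rw [e1, e2]
  have := hsc (N - n) (by omega) (by omega)
  linarith

lemma st18_sc_to_J {N : ℕ} {T : ℕ → ℝ} (hpos : ∀ n ≤ N, 0 < T n)
    (hsc : ∀ n : ℕ, 1 ≤ n → n ≤ N - 1 →
      (T n - T (n + 1)) / ((T n) ^ (-(1:ℝ)/2) + (T (n + 1)) ^ (-(1:ℝ)/2)) +
      (T n - T (n - 1)) / ((T n) ^ (-(1:ℝ)/2) + (T (n - 1)) ^ (-(1:ℝ)/2)) = 0) :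
    ∃ J, ∀ n < N, Real.sqrt (T n) * Real.sqrt (T (n+1))
      * (Real.sqrt (T (n+1)) - Real.sqrt (T n)) = J := by
  refine ⟨st18cur T 0, fun n hn => ?_⟩
  rw [← st18_cur_eq n (hpos n (by omega)) (hpos (n+1) (by omega))]
  exact st18_cur_const hsc n hn

lemma st18_J_to_sc {N : ℕ} {T : ℕ → ℝ} {J : ℝ} (hpos : ∀ n ≤ N, 0 < T n)
    (hJ : ∀ n < N, Real.sqrt (T n) * Real.sqrt (T (n+1))
      * (Real.sqrt (T (n+1)) - Real.sqrt (T n)) = J) :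
    ∀ n : ℕ, 1 ≤ n → n ≤ N - 1 →
      (T n - T (n + 1)) / ((T n) ^ (-(1:ℝ)/2) + (T (n + 1)) ^ (-(1:ℝ)/2)) +
      (T n - T (n - 1)) / ((T n) ^ (-(1:ℝ)/2) + (T (n - 1)) ^ (-(1:ℝ)/2)) = 0 :=
  st18_sc_of_const (J := J) (fun n hn => by
    rw [st18_cur_eq n (hpos n (by omega)) (hpos (n+1) (by omega))]
    exact hJ n hn)

/-- confined self-consistent profiles. (a) a positive family
`(T_0,…,T_N)` satisfies the confined self-consistency equations iff the discrete
current `J_n = (T_{n+1}−T_n)/(T_n^{−1/2}+T_{n+1}^{−1/2})` is independent of `n`;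
(b) there is exactly one such profile with `T_0 = T_L`, `T_N = T_R`;
(c) if `T_L ≤ T_R` this profile is nondecreasing and concave. -/
theorem stmt_18 (N : ℕ) (hN : 2 ≤ N) (TL TR : ℝ) (hTL : 0 < TL) (hTR : 0 < TR) :
    let SC : (ℕ → ℝ) → Prop := fun T => ∀ n : ℕ, 1 ≤ n → n ≤ N - 1 →
      (T n - T (n + 1)) / ((T n) ^ (-(1:ℝ)/2) + (T (n + 1)) ^ (-(1:ℝ)/2)) +
      (T n - T (n - 1)) / ((T n) ^ (-(1:ℝ)/2) + (T (n - 1)) ^ (-(1:ℝ)/2)) = 0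
    -- (a)
    (∀ T : ℕ → ℝ, (∀ n ≤ N, 0 < T n) →
      (SC T ↔ ∃ J : ℝ, ∀ n < N,
        (T (n + 1) - T n) / ((T n) ^ (-(1:ℝ)/2) + (T (n + 1)) ^ (-(1:ℝ)/2)) = J)) ∧
    -- (b) existence
    (∃ T : ℕ → ℝ, (∀ n ≤ N, 0 < T n) ∧ T 0 = TL ∧ T N = TR ∧ SC T) ∧
    -- (b) uniqueness
    (∀ T T' : ℕ → ℝ, (∀ n ≤ N, 0 < T n) → T 0 = TL → T N = TR → SC T →
      (∀ n ≤ N, 0 < T' n) → T' 0 = TL → T' N = TR → SC T' →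
      ∀ n ≤ N, T n = T' n) ∧
    -- (c)
    (TL ≤ TR → ∀ T : ℕ → ℝ, (∀ n ≤ N, 0 < T n) → T 0 = TL → T N = TR → SC T →
      (∀ n < N, T n ≤ T (n + 1)) ∧
      (∀ n : ℕ, 1 ≤ n → n < N → T (n + 1) - T n ≤ T n - T (n - 1))) := by
  intro SC
  refine ⟨?_, ?_, ?_, ?_⟩
  -- (a)
  · intro T hpos
    constructor
    · intro hsc
      exact ⟨st18cur T 0, fun n hn => st18_cur_const hsc n hn⟩
    · rintro ⟨J, hJ⟩
      exact st18_sc_of_const (J := J) (fun n hn => hJ n hn)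
  -- (b) existence
  · rcases le_total TL TR with h | h
    · obtain ⟨T, hp, h0, hE, J, hJ0, hJall⟩ := st18_exists (by omega : 1 ≤ N) hTL hTR h
      exact ⟨T, hp, h0, hE, st18_J_to_sc hp hJall⟩
    · obtain ⟨U, hp, h0, hE, J, hJ0, hJall⟩ := st18_exists (by omega : 1 ≤ N) hTR hTL h
      refine ⟨fun n => U (N - n), fun n hn => hp (N - n) (by omega), ?_, ?_, ?_⟩
      · show U (N - 0) = TL; rw [Nat.sub_zero]; exact hE
      · show U (N - N) = TR; rw [Nat.sub_self]; exact h0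
      · exact st18_rev (st18_J_to_sc hp hJall)
  -- (b) uniqueness
  · intro T T' hp h0 hE hsc hp' h0' hE' hsc'
    rcases le_total TL TR with h | h
    · obtain ⟨J, hJall⟩ := st18_sc_to_J hp hsc
      obtain ⟨J', hJ'all⟩ := st18_sc_to_J hp' hsc'
      exact st18_uniq (by omega : 1 ≤ N) hp hp' (by rw [h0, h0']) (by rw [hE, hE'])
        (by rw [h0, hE]; exact h) hJall hJ'all
    · have hpU : ∀ n ≤ N, 0 < T (N - n) := fun n hn => hp (N - n) (by omega)
      have hpU' : ∀ n ≤ N, 0 < T' (N - n) := fun n hn => hp' (N - n) (by omega)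
      obtain ⟨J, hJall⟩ := st18_sc_to_J (T := fun n => T (N - n)) hpU (st18_rev hsc)
      obtain ⟨J', hJ'all⟩ := st18_sc_to_J (T := fun n => T' (N - n)) hpU' (st18_rev hsc')
      have huniq := st18_uniq (T := fun n => T (N - n)) (T' := fun n => T' (N - n))
        (by omega : 1 ≤ N) hpU hpU'
        (by show T (N - 0) = T' (N - 0); rw [Nat.sub_zero, hE, hE'])
        (by show T (N - N) = T' (N - N); rw [Nat.sub_self, h0, h0'])
        (by show T (N - 0) ≤ T (N - N); rw [Nat.sub_zero, Nat.sub_self, hE, h0]; exact h)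
        hJall hJ'all
      intro n hn
      have h2 : T (N - (N - n)) = T' (N - (N - n)) := huniq (N - n) (by omega)
      rwa [show N - (N - n) = n by omega] at h2
  -- (c)
  · intro hle T hp h0 hE hsc
    obtain ⟨J, hJall⟩ := st18_sc_to_J hp hsc
    have hspos : ∀ n ≤ N, 0 < Real.sqrt (T n) := fun n hn => Real.sqrt_pos.mpr (hp n hn)
    have hsle : Real.sqrt (T 0) ≤ Real.sqrt (T N) := by
      rw [h0, hE]; exact Real.sqrt_le_sqrt hle
    have hJ0 : 0 ≤ J := st18_Jnonneg (by omega : 1 ≤ N) hspos hJall hsle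
    have hsmono : ∀ n < N, Real.sqrt (T n) ≤ Real.sqrt (T (n+1)) := by
      intro n hn
      nlinarith [hJall n hn, mul_pos (hspos n (by omega)) (hspos (n+1) (by omega)), hJ0]
    constructor
    · intro n hn
      calc T n = (Real.sqrt (T n))^2 := (Real.sq_sqrt (hp n (by omega)).le).symm
        _ ≤ (Real.sqrt (T (n+1)))^2 := by
            have := hsmono n hn
            nlinarith [Real.sqrt_nonneg (T n)]
        _ = T (n+1) := Real.sq_sqrt (hp (n+1) (by omega)).le
    · intro n h1 hn
      obtain ⟨m, rfl⟩ : ∃ m, n = m + 1 := ⟨n - 1, by omega⟩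
      simp only [Nat.add_sub_cancel]
      have ha := hspos m (by omega)
      have hb := hspos (m+1) (by omega)
      have hcc := hspos (m+1+1) (by omega)
      have h0' := hJall m (by omega)
      have h1' := hJall (m+1) hn
      have hac : Real.sqrt (T m) ≤ Real.sqrt (T (m+1+1)) :=
        le_trans (hsmono m (by omega)) (hsmono (m+1) hn)
      have key : ((Real.sqrt (T (m+1)))^2 - (Real.sqrt (T m))^2
            - ((Real.sqrt (T (m+1+1)))^2 - (Real.sqrt (T (m+1)))^2))
            * (Real.sqrt (T m) * Real.sqrt (T (m+1)) * Real.sqrt (T (m+1+1)))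
          = J * Real.sqrt (T (m+1)) * (Real.sqrt (T (m+1+1)) - Real.sqrt (T m)) := by
        linear_combination (Real.sqrt (T m) + Real.sqrt (T (m+1))) * Real.sqrt (T (m+1+1)) * h0'
          - (Real.sqrt (T (m+1)) + Real.sqrt (T (m+1+1))) * Real.sqrt (T m) * h1'
      have habc : 0 < Real.sqrt (T m) * Real.sqrt (T (m+1)) * Real.sqrt (T (m+1+1)) :=
        mul_pos (mul_pos ha hb) hcc
      have hrhs : 0 ≤ J * Real.sqrt (T (m+1)) * (Real.sqrt (T (m+1+1)) - Real.sqrt (T m)) :=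
        mul_nonneg (mul_nonneg hJ0 hb.le) (sub_nonneg.mpr hac)
      have e0 : T m = (Real.sqrt (T m))^2 := (Real.sq_sqrt (hp m (by omega)).le).symm
      have e1 : T (m+1) = (Real.sqrt (T (m+1)))^2 := (Real.sq_sqrt (hp (m+1) (by omega)).le).symm
      have e2 : T (m+1+1) = (Real.sqrt (T (m+1+1)))^2 := (Real.sq_sqrt (hp (m+1+1) (by omega)).le).symm
      rw [e0, e1, e2]
      nlinarith [key, habc, hrhs]
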